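/- Let H > 0 and let f : ℝ^d → ℝ be given by f(x) = (H/3)·‖x‖³. Then f is twice differentiable, its Hessian is 2H-Lipschitz in operator norm, i.e., ‖∇²f(x) − ∇²f(y)‖ ≤ 2H·‖x − y‖ for all x, y ∈ ℝ^d, and for every x ∈ ℝ^d: ⟨∇f(x), ∇²f(x)∇f(x)⟩ ≤ √(4H) · ‖∇f(x)‖^{5/2}. -/

import Mathlib

open scoped RealInnerProductSpace


section aux

variable {E : Type*} [NormedAddCommGroup E] [InnerProductSpace ℝ E]

private lemma cs_sq (p q : E) : ⟪p, q⟫^2 ≤ ‖p‖^2 * ‖q‖^2 := by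
  have h := abs_real_inner_le_norm p q
  nlinarith [abs_nonneg (⟪p, q⟫ : ℝ), sq_abs (⟪p, q⟫ : ℝ), norm_nonneg p, norm_nonneg q]

noncomputable def isoHess (H : ℝ) (x : E) : E →L[ℝ] E :=
  (H * ‖x‖) • ContinuousLinearMap.id ℝ E + (H / ‖x‖) • ((innerSL ℝ x).smulRight x)

lemma isoHess_apply (H : ℝ) (x v : E) :
    isoHess H x v = (H * ‖x‖) • v + ((H / ‖x‖) * ⟪x, v⟫) • x := by
  simp [isoHess, ContinuousLinearMap.smulRight_apply, smul_smul]

lemma isoHess_zero (H : ℝ) : isoHess H (0 : E) = 0 := by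
  ext v; simp [isoHess_apply]

lemma isoHess_form (H : ℝ) (x v : E) :
    ⟪v, isoHess H x v⟫ = H * ‖x‖ * ‖v‖^2 + H / ‖x‖ * ⟪x, v⟫^2 := by
  rw [isoHess_apply, inner_add_right, real_inner_smul_right, real_inner_smul_right,
    real_inner_self_eq_norm_sq, real_inner_comm v x]
  ring

lemma isoHess_symm (H : ℝ) (x u v : E) :
    ⟪isoHess H x u, v⟫ = ⟪u, isoHess H x v⟫ := by
  rw [isoHess_apply, isoHess_apply, inner_add_left, inner_add_right,
    real_inner_smul_left, real_inner_smul_right, real_inner_smul_left,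
    real_inner_smul_right, real_inner_comm u x]
  ring

end aux

lemma scalar_helper (r s t n a b : ℝ) (hr : 0 < r) (hs : 0 < s) (ht : 0 ≤ t) (hn : 0 ≤ n)
    (h1 : a^2 ≤ r^2*n) (h2 : b^2 ≤ s^2*n) (h3 : (a-b)^2 ≤ t^2*n) (h4 : (r-s)^2 ≤ t^2) :
    r*s*(r-s)*n + s*a^2 - r*b^2 ≤ 2*t*(r*s*n) := by
  have key : r*s*(r-s)*n + s*a^2 - r*b^2
      = (r-s)*(r*s*n - a*b) + (a-b)*(s*a + r*b) := by ring
  have habsq : (a*b)^2 ≤ (r*s*n)^2 := by nlinarith [sq_nonneg a, sq_nonneg b]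
  have hrsn : 0 ≤ r*s*n := by positivity
  have hA : 0 ≤ r*s*n - a*b := by nlinarith [abs_le_of_sq_le_sq' habsq hrsn]
  have hB : 0 ≤ r*s*n + a*b := by nlinarith [abs_le_of_sq_le_sq' habsq hrsn]
  have hrst : r - s ≤ t := by nlinarith
  have t1 : (r-s)*(r*s*n - a*b) ≤ t*(r*s*n - a*b) :=
    mul_le_mul_of_nonneg_right hrst hA
  have e2 : ((a-b)*(s*a+r*b))^2 ≤ (t*(r*s*n + a*b))^2 := by
    have : (a-b)^2*(s*a+r*b)^2 ≤ t^2*n*(s*a+r*b)^2 :=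
      mul_le_mul_of_nonneg_right h3 (sq_nonneg _)
    nlinarith [mul_le_mul_of_nonneg_left (sub_nonneg.mpr h1) (sub_nonneg.mpr h2), sq_nonneg t]
  have t2 : (a-b)*(s*a+r*b) ≤ t*(r*s*n + a*b) := by
    have := abs_le_of_sq_le_sq' e2 (by positivity)
    linarith [this.2]
  linarith [key, t1, t2]

lemma scalar_abs (r s t n a b : ℝ) (hr : 0 < r) (hs : 0 < s) (ht : 0 ≤ t) (hn : 0 ≤ n)
    (h1 : a^2 ≤ r^2*n) (h2 : b^2 ≤ s^2*n) (h3 : (a-b)^2 ≤ t^2*n) (h4 : (r-s)^2 ≤ t^2) :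
    |(r-s)*n + a^2/r - b^2/s| ≤ 2*t*n := by
  have hup := scalar_helper r s t n a b hr hs ht hn h1 h2 h3 h4
  have hlo := scalar_helper s r t n b a hs hr ht hn h2 h1 (by nlinarith) (by nlinarith)
  have hrs : 0 < r*s := mul_pos hr hs
  have hX : r*s*((r-s)*n + a^2/r - b^2/s) = r*s*(r-s)*n + s*a^2 - r*b^2 := by
    field_simp
  rw [abs_le]
  constructor
  · have : r*s*(-(2*t*n)) ≤ r*s*((r-s)*n + a^2/r - b^2/s) := by
      rw [hX]; nlinarith [hlo]
    exact (mul_le_mul_iff_right₀ hrs).mp this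
  · have : r*s*((r-s)*n + a^2/r - b^2/s) ≤ r*s*(2*t*n) := by
      rw [hX]; nlinarith [hup]
    exact (mul_le_mul_iff_right₀ hrs).mp this

section aux2
variable {E : Type*} [NormedAddCommGroup E] [InnerProductSpace ℝ E]



lemma opNorm_le_of_quadratic (T : E →L[ℝ] E) {C : ℝ} (hC : 0 ≤ C)
    (hsym : ∀ u v : E, ⟪T u, v⟫ = ⟪u, T v⟫)
    (h : ∀ v : E, |⟪v, T v⟫| ≤ C * ‖v‖^2) : ‖T‖ ≤ C := by
  refine T.opNorm_le_bound hC fun u => ?_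
  rcases eq_or_ne (T u) 0 with hTu | hTu
  · rw [hTu, norm_zero]; positivity
  have hu : u ≠ 0 := by rintro rfl; simp at hTu
  set v : E := (‖u‖ / ‖T u‖) • T u with hv
  have hnv : ‖v‖ = ‖u‖ := by
    rw [hv, norm_smul, norm_div, Real.norm_eq_abs, abs_of_nonneg (norm_nonneg _),
      Real.norm_eq_abs, abs_of_nonneg (norm_nonneg _),
      div_mul_cancel₀ _ (norm_ne_zero_iff.mpr hTu)]
  have hpol : 4 * ⟪T u, v⟫ = ⟪u + v, T (u + v)⟫ - ⟪u - v, T (u - v)⟫ := by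
    have h1 : ⟪u, T v⟫ = ⟪T u, v⟫ := (hsym u v).symm
    have h2 : ⟪v, T u⟫ = ⟪T u, v⟫ := real_inner_comm _ _
    simp only [map_add, map_sub, inner_add_left, inner_add_right, inner_sub_left,
      inner_sub_right]
    linarith
  have hq : ⟪T u, v⟫ ≤ C * ‖u‖^2 := by
    have b1 := h (u + v); have b2 := h (u - v)
    have par : ‖u + v‖^2 + ‖u - v‖^2 = 2*‖u‖^2 + 2*‖v‖^2 := by
      rw [@norm_add_sq_real, @norm_sub_sq_real]; ring
    have : 4 * ⟪T u, v⟫ ≤ C * ‖u + v‖^2 + C * ‖u - v‖^2 := by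
      rw [hpol]
      have := abs_le.mp b1
      have := abs_le.mp b2
      linarith
    rw [hnv] at par
    nlinarith
  have hin : ⟪T u, v⟫ = ‖u‖ * ‖T u‖ := by
    rw [hv, real_inner_smul_right, real_inner_self_eq_norm_sq]
    rw [div_mul_eq_mul_div, sq]
    rw [mul_div_assoc, mul_div_cancel_left₀ _ (norm_ne_zero_iff.mpr hTu)]
  rw [hin] at hq
  have hun : 0 < ‖u‖ := norm_pos_iff.mpr hu
  calc ‖T u‖ = (‖u‖ * ‖T u‖) / ‖u‖ := by field_simp
  _ ≤ (C * ‖u‖^2) / ‖u‖ := by gcongr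
  _ = C * ‖u‖ := by field_simp

lemma isoHess_lip (H : ℝ) (hH : 0 < H) (x y : E) :
    ‖isoHess H x - isoHess H y‖ ≤ 2 * H * ‖x - y‖ := by
  refine opNorm_le_of_quadratic _ (by positivity) (fun u v => ?_) (fun v => ?_)
  · simp only [ContinuousLinearMap.sub_apply, inner_sub_left, inner_sub_right,
      isoHess_symm]
  · have hform : ⟪v, (isoHess H x - isoHess H y) v⟫
        = (H * ‖x‖ * ‖v‖^2 + H / ‖x‖ * ⟪x, v⟫^2)
          - (H * ‖y‖ * ‖v‖^2 + H / ‖y‖ * ⟪y, v⟫^2) := by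
      rw [ContinuousLinearMap.sub_apply, inner_sub_right, isoHess_form, isoHess_form]
    rcases eq_or_ne x 0 with rfl | hx
    · rcases eq_or_ne y 0 with rfl | hy
      · simp [hform]
      · have hyn : 0 < ‖y‖ := norm_pos_iff.mpr hy
        have hb := cs_sq y v
        rw [hform]
        simp only [norm_zero, inner_zero_left, mul_zero, zero_mul, zero_add,
          ne_eq, OfNat.ofNat_ne_zero, not_false_eq_true, zero_pow, zero_sub, abs_neg,
          zero_sub, norm_neg]
        have h1 : 0 ≤ H / ‖y‖ * ⟪y, v⟫^2 := by positivity
        have h2 : H / ‖y‖ * ⟪y, v⟫^2 ≤ H * ‖y‖ * ‖v‖^2 := by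
          rw [div_mul_eq_mul_div, div_le_iff₀ hyn]
          nlinarith
        rw [abs_of_nonneg (by positivity)]
        nlinarith
    · rcases eq_or_ne y 0 with rfl | hy
      · have hxn : 0 < ‖x‖ := norm_pos_iff.mpr hx
        have ha := cs_sq x v
        rw [hform]
        simp only [norm_zero, inner_zero_left, mul_zero, zero_mul, zero_add,
          ne_eq, OfNat.ofNat_ne_zero, not_false_eq_true, zero_pow, sub_zero]
        have h2 : H / ‖x‖ * ⟪x, v⟫^2 ≤ H * ‖x‖ * ‖v‖^2 := by
          rw [div_mul_eq_mul_div, div_le_iff₀ hxn]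
          nlinarith
        rw [abs_of_nonneg (by positivity)]
        nlinarith
      · have hxn : 0 < ‖x‖ := norm_pos_iff.mpr hx
        have hyn : 0 < ‖y‖ := norm_pos_iff.mpr hy
        have key := scalar_abs ‖x‖ ‖y‖ ‖x - y‖ (‖v‖^2) ⟪x, v⟫ ⟪y, v⟫ hxn hyn
          (norm_nonneg _) (by positivity) (cs_sq x v) (cs_sq y v)
          (by rw [← inner_sub_left]; exact cs_sq (x - y) v)
          (by nlinarith [abs_norm_sub_norm_le x y, sq_abs (‖x‖ - ‖y‖),
            abs_nonneg (‖x‖ - ‖y‖), norm_nonneg (x - y)])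
        rw [hform]
        have hrw : (H * ‖x‖ * ‖v‖^2 + H / ‖x‖ * ⟪x, v⟫^2)
            - (H * ‖y‖ * ‖v‖^2 + H / ‖y‖ * ⟪y, v⟫^2)
            = H * ((‖x‖ - ‖y‖) * ‖v‖^2 + ⟪x, v⟫^2/‖x‖ - ⟪y, v⟫^2/‖y‖) := by
          ring
        rw [hrw, abs_mul, abs_of_pos hH]
        calc H * |(‖x‖ - ‖y‖) * ‖v‖^2 + ⟪x, v⟫^2/‖x‖ - ⟪y, v⟫^2/‖y‖|
            ≤ H * (2 * ‖x - y‖ * ‖v‖^2) := by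
              exact mul_le_mul_of_nonneg_left key hH.le
          _ = 2 * H * ‖x - y‖ * ‖v‖^2 := by ring

end aux2

section calc1
variable {E : Type*} [NormedAddCommGroup E] [InnerProductSpace ℝ E]

lemma hasFDerivAt_zero_of_sq {G : Type*} [NormedAddCommGroup G] [NormedSpace ℝ G]
    (F : E → G) (C : ℝ) (hC : 0 ≤ C) (h : ∀ y : E, ‖y‖ ≤ 1 → ‖F y - F 0‖ ≤ C * ‖y‖^2) :
    HasFDerivAt F (0 : E →L[ℝ] G) 0 := by
  rw [hasFDerivAt_iff_isLittleO_nhds_zero]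
  rw [Asymptotics.isLittleO_iff]
  intro c hc
  have hpos : (0:ℝ) < min 1 (c / (C + 1)) := by positivity
  filter_upwards [Metric.ball_mem_nhds (0:E) hpos] with y hy
  rw [Metric.mem_ball, dist_zero_right] at hy
  have hy1 : ‖y‖ ≤ 1 := le_of_lt (lt_of_lt_of_le hy (min_le_left _ _))
  have hy2 : ‖y‖ ≤ c / (C + 1) := le_of_lt (lt_of_lt_of_le hy (min_le_right _ _))
  have h1 := h y hy1
  simp only [zero_add, ContinuousLinearMap.zero_apply, sub_zero]
  have h2 : C * ‖y‖^2 ≤ c * ‖y‖ := by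
    have h3 : ‖y‖ * (C + 1) ≤ c := by
      rw [← le_div_iff₀ (by positivity)]; exact hy2
    nlinarith [norm_nonneg y]
  calc ‖F y - F 0‖ ≤ C * ‖y‖^2 := h1
    _ ≤ c * ‖y‖ := h2

variable [CompleteSpace E]

lemma hasGradientAt_cubic (H : ℝ) (x : E) :
    HasGradientAt (fun y : E => (H/3) * ‖y‖^3) ((H * ‖x‖) • x) x := by
  rcases eq_or_ne x 0 with rfl | hx
  · have h0 : HasFDerivAt (fun y : E => (H/3) * ‖y‖^3) (0 : E →L[ℝ] ℝ) 0 := by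
      apply hasFDerivAt_zero_of_sq _ (|H|/3) (by positivity)
      intro y hy
      simp only [norm_zero, ne_eq, OfNat.ofNat_ne_zero, not_false_eq_true, zero_pow,
        mul_zero, sub_zero, Real.norm_eq_abs, abs_mul, abs_div]
      rw [abs_pow, abs_norm]
      have : ‖y‖^3 ≤ ‖y‖^2 := by nlinarith [norm_nonneg y]
      calc |H|/|3| * ‖y‖^3 ≤ |H|/|3| * ‖y‖^2 := by
            apply mul_le_mul_of_nonneg_left this (by positivity)
        _ ≤ |H|/3 * ‖y‖^2 := by rw [abs_of_pos (by norm_num : (0:ℝ) < 3)]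
    have := h0.hasGradientAt
    simpa using this
  · have hnx : 0 < ‖x‖ := norm_pos_iff.mpr hx
    have hsq : HasFDerivAt (fun y : E => ‖y‖^2) (2 • innerSL ℝ x) x :=
      (hasStrictFDerivAt_norm_sq x).hasFDerivAt
    have hpos : (0:ℝ) < ‖x‖^2 := by positivity
    set φ : ℝ → ℝ := fun t => (H/3) * (t * Real.sqrt t) with hφdef
    have hφ : HasDerivAt φ ((H/2) * ‖x‖) (‖x‖^2) := by
      have h1 : HasDerivAt (fun t : ℝ => t * Real.sqrt t)
          (1 * Real.sqrt (‖x‖^2) + ‖x‖^2 * (1/(2 * Real.sqrt (‖x‖^2)))) (‖x‖^2) :=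
        (hasDerivAt_id _).mul (Real.hasDerivAt_sqrt (ne_of_gt hpos))
      have h2 := h1.const_mul (H/3)
      refine h2.congr_deriv ?_
      rw [Real.sqrt_sq (norm_nonneg x)]
      field_simp
      ring
    have hcomp := hφ.comp_hasFDerivAt x hsq
    have hfun : (fun y : E => (H/3) * ‖y‖^3) = φ ∘ (fun y : E => ‖y‖^2) := by
      funext y
      simp only [Function.comp_apply, hφdef, Real.sqrt_sq (norm_nonneg y)]
      ring
    rw [hfun]
    rw [hasGradientAt_iff_hasFDerivAt]
    refine hcomp.congr_fderiv ?_
    ext v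
    rw [two_smul]
    simp only [InnerProductSpace.toDual_apply_apply, real_inner_smul_left,
      ContinuousLinearMap.smul_apply, smul_eq_mul,
      ContinuousLinearMap.add_apply, innerSL_apply_apply]
    ring

lemma hasFDerivAt_grad_cubic (H : ℝ) (x : E) :
    HasFDerivAt (fun y : E => (H * ‖y‖) • y) (isoHess H x) x := by
  rcases eq_or_ne x 0 with rfl | hx
  · rw [isoHess_zero]
    apply hasFDerivAt_zero_of_sq _ |H| (abs_nonneg H)
    intro y _
    simp only [norm_zero, mul_zero, zero_smul, sub_zero, norm_smul, Real.norm_eq_abs,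
      abs_mul, abs_norm]
    nlinarith [norm_nonneg y, abs_nonneg H]
  · have hnx : 0 < ‖x‖ := norm_pos_iff.mpr hx
    have hsq : HasFDerivAt (fun y : E => ‖y‖^2) (2 • innerSL ℝ x) x :=
      (hasStrictFDerivAt_norm_sq x).hasFDerivAt
    have hpos : (0:ℝ) < ‖x‖^2 := by positivity
    set ψ : ℝ → ℝ := fun t => H * Real.sqrt t with hψdef
    have hψ : HasDerivAt ψ (H * (1/(2 * ‖x‖))) (‖x‖^2) := by
      have h1 := (Real.hasDerivAt_sqrt (ne_of_gt hpos)).const_mul H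
      refine h1.congr_deriv ?_
      rw [Real.sqrt_sq (norm_nonneg x)]
    have hc : HasFDerivAt (fun y : E => H * ‖y‖) ((H/‖x‖) • innerSL ℝ x) x := by
      have hcomp := hψ.comp_hasFDerivAt x hsq
      have hfun : (fun y : E => H * ‖y‖) = ψ ∘ (fun y : E => ‖y‖^2) := by
        funext y
        simp only [Function.comp_apply, hψdef, Real.sqrt_sq (norm_nonneg y)]
      rw [hfun]
      refine hcomp.congr_fderiv ?_
      ext v
      rw [two_smul]
      simp only [ContinuousLinearMap.smul_apply, innerSL_apply_apply, smul_eq_mul,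
        ContinuousLinearMap.add_apply]
      field_simp
      ring
    have hF := hc.smul (hasFDerivAt_id x)
    refine hF.congr_fderiv ?_
    ext v
    simp only [isoHess_apply, ContinuousLinearMap.add_apply,
      ContinuousLinearMap.smul_apply, ContinuousLinearMap.id_apply,
      ContinuousLinearMap.smulRight_apply, innerSL_apply_apply, smul_eq_mul]
    rfl

end calc1

/-- for `f(x) = (H/3)‖x‖³`, `f` is twice differentiable, its
Hessian is `2H`-Lipschitz in operator norm, and the vanishing directional
curvature bound holds with constant `4H`. -/
theorem iso_cubic_properties {d : ℕ} (H : ℝ) (hH : 0 < H)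
    (f : EuclideanSpace ℝ (Fin d) → ℝ)
    (hf : ∀ x, f x = (H/3) * ‖x‖^3) :
    (Differentiable ℝ f ∧ Differentiable ℝ (gradient f)) ∧
    (∀ x y : EuclideanSpace ℝ (Fin d),
      ‖fderiv ℝ (gradient f) x - fderiv ℝ (gradient f) y‖ ≤ 2 * H * ‖x - y‖) ∧
    (∀ x : EuclideanSpace ℝ (Fin d),
      ⟪gradient f x, fderiv ℝ (gradient f) x (gradient f x)⟫
        ≤ Real.sqrt (4*H) * ‖gradient f x‖ ^ ((5:ℝ)/2)) := by
  have hfe : f = fun x => (H/3) * ‖x‖^3 := funext hf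
  subst hfe
  have hgrad : gradient (fun x : EuclideanSpace ℝ (Fin d) => (H/3) * ‖x‖^3)
      = fun x => (H * ‖x‖) • x := gradient_eq (fun x => hasGradientAt_cubic H x)
  have hfder : ∀ x : EuclideanSpace ℝ (Fin d),
      fderiv ℝ (gradient (fun x : EuclideanSpace ℝ (Fin d) => (H/3) * ‖x‖^3)) x
        = isoHess H x := by
    intro x; rw [hgrad]; exact (hasFDerivAt_grad_cubic H x).fderiv
  refine ⟨⟨fun x => (hasGradientAt_cubic H x).hasFDerivAt.differentiableAt, ?_⟩, ?_, ?_⟩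
  · rw [hgrad]; exact fun x => (hasFDerivAt_grad_cubic H x).differentiableAt
  · intro x y; rw [hfder x, hfder y]; exact isoHess_lip H hH x y
  · intro x
    rw [hfder x, hgrad]
    simp only []
    rcases eq_or_ne x 0 with rfl | hx
    · simp [isoHess_zero, Real.zero_rpow (by norm_num : ((5:ℝ)/2) ≠ 0)]
    · have hnx : 0 < ‖x‖ := norm_pos_iff.mpr hx
      have hgnorm : ‖(H * ‖x‖) • x‖ = H * ‖x‖^2 := by
        rw [norm_smul, Real.norm_eq_abs, abs_of_pos (by positivity)]; ring
      have hlhs : ⟪(H * ‖x‖) • x, isoHess H x ((H * ‖x‖) • x)⟫ = 2 * H^3 * ‖x‖^5 := by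
        rw [isoHess_form H x ((H * ‖x‖) • x), hgnorm, real_inner_smul_right,
          real_inner_self_eq_norm_sq]
        field_simp
        ring
      have h1 : Real.sqrt (4*H) = 2 * Real.sqrt H := by
        rw [show (4:ℝ)*H = 2^2*H by ring, Real.sqrt_mul (by positivity),
          Real.sqrt_sq (by norm_num : (0:ℝ) ≤ 2)]
      have h2 : (H * ‖x‖^2)^((5:ℝ)/2) = H^((5:ℝ)/2) * ((‖x‖^2 : ℝ))^((5:ℝ)/2) :=
        Real.mul_rpow hH.le (sq_nonneg _)
      have h3 : ((‖x‖^2 : ℝ))^((5:ℝ)/2) = ‖x‖^5 := by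
        rw [← Real.rpow_natCast ‖x‖ 2, ← Real.rpow_mul (norm_nonneg x),
          ← Real.rpow_natCast ‖x‖ 5]
        norm_num
      have h4 : Real.sqrt H * H^((5:ℝ)/2) = H^3 := by
        rw [Real.sqrt_eq_rpow, ← Real.rpow_add hH, ← Real.rpow_natCast H 3]
        norm_num
      rw [hlhs, hgnorm, h2, h3, h1]
      rw [show 2 * Real.sqrt H * (H^((5:ℝ)/2) * ‖x‖^5)
        = 2 * (Real.sqrt H * H^((5:ℝ)/2)) * ‖x‖^5 by ring, h4]
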